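/- Let k be an algebraically closed field of characteristic zero, let a and b be positive integers, and let μ = a^a·b^b/(a+b)^{a+b} ∈ k. Then in the polynomial X^a·(1−X)^b − μ ∈ k[X], the element a/(a+b) is a root of multiplicity exactly 2, every other root is simple, and the polynomial has exactly a+b−1 distinct roots in k. -/

import Mathlib

open Polynomial Classical in
/-- At the critical value `μ = a^a·b^b/(a+b)^{a+b}`, the polynomial `X^a(1−X)^b − μ`
has `a/(a+b)` as a root of multiplicity exactly `2`, every other root is simple, and
it has exactly `a+b−1` distinct roots. -/
theorem pow_mul_one_sub_pow_sub_critical_value_roots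
    (k : Type*) [Field k] [IsAlgClosed k] [CharZero k]
    (a b : ℕ) (ha : 0 < a) (hb : 0 < b)
    (μ : k) (hμ : μ = (a : k) ^ a * (b : k) ^ b / ((a : k) + b) ^ (a + b)) :
    (X ^ a * (1 - X) ^ b - C μ : k[X]).rootMultiplicity ((a : k) / ((a : k) + b)) = 2 ∧
      (∀ r : k, (X ^ a * (1 - X) ^ b - C μ : k[X]).IsRoot r →
        r ≠ (a : k) / ((a : k) + b) →
        (X ^ a * (1 - X) ^ b - C μ : k[X]).rootMultiplicity r = 1) ∧
      (X ^ a * (1 - X) ^ b - C μ : k[X]).roots.toFinset.card = a + b - 1 := by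
  have ha0 : (a : k) ≠ 0 := Nat.cast_ne_zero.mpr ha.ne'
  have hb0 : (b : k) ≠ 0 := Nat.cast_ne_zero.mpr hb.ne'
  have hab : ((a : k) + b) ≠ 0 := by
    have : ((a + b : ℕ) : k) ≠ 0 := Nat.cast_ne_zero.mpr (by omega)
    simpa using this
  set c : k := (a : k) / ((a : k) + b) with hc
  set f : k[X] := X ^ a * (1 - X) ^ b - C μ with hf
  have hμ0 : μ ≠ 0 := by
    rw [hμ]
    exact div_ne_zero (mul_ne_zero (pow_ne_zero _ ha0) (pow_ne_zero _ hb0))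
      (pow_ne_zero _ hab)
  have hc0 : c ≠ 0 := div_ne_zero ha0 hab
  have h1c : 1 - c = (b : k) / ((a : k) + b) := by
    rw [hc]; field_simp; ring
  have hc1 : (1 : k) - c ≠ 0 := by
    rw [h1c]; exact div_ne_zero hb0 hab
  have heval : ∀ r : k, f.eval r = r ^ a * (1 - r) ^ b - μ := by
    intro r; simp [hf]
  have hkey : c ^ a * (1 - c) ^ b = μ := by
    rw [h1c, hc, hμ, div_pow, div_pow, div_mul_div_comm, ← pow_add]
  have hroot_c : f.IsRoot c := by
    simp [IsRoot, heval, hkey]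
  -- derivative
  have hderiv : derivative f
      = X ^ (a - 1) * (1 - X) ^ (b - 1) * ((a : k[X]) - ((a : k[X]) + (b : k[X])) * X) := by
    obtain ⟨a', rfl⟩ : ∃ a', a = a' + 1 := ⟨a - 1, by omega⟩
    obtain ⟨b', rfl⟩ : ∃ b', b = b' + 1 := ⟨b - 1, by omega⟩
    simp only [hf, derivative_sub, derivative_C, sub_zero, derivative_mul, derivative_X_pow,
      derivative_pow, derivative_one, derivative_X, Nat.add_sub_cancel, C_eq_natCast]
    push_cast
    ring
  have hevald : ∀ r : k, (derivative f).eval r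
      = r ^ (a - 1) * (1 - r) ^ (b - 1) * ((a : k) - ((a : k) + b) * r) := by
    intro r; rw [hderiv]; simp
  -- roots avoid 0 and 1
  have hne : ∀ r : k, f.IsRoot r → r ≠ 0 ∧ (1 : k) - r ≠ 0 := by
    intro r hr
    have h : r ^ a * (1 - r) ^ b = μ := by
      have := hr
      rw [IsRoot, heval, sub_eq_zero] at this
      exact this
    constructor
    · rintro rfl
      rw [zero_pow ha.ne'] at h
      simp at h
      exact hμ0 h.symm
    · intro h1
      rw [h1, zero_pow hb.ne'] at h
      simp at h
      exact hμ0 h.symm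
  -- natDegree
  have h1X : (1 - X : k[X]).natDegree = 1 := by
    have : (1 - X : k[X]) = -(X - C 1) := by rw [C_1]; ring
    rw [this, natDegree_neg, natDegree_X_sub_C]
  have hXp : (X ^ a : k[X]) ≠ 0 := pow_ne_zero _ X_ne_zero
  have h1Xb : ((1 - X : k[X]) ^ b) ≠ 0 := pow_ne_zero _ (by
    intro h
    have := congrArg natDegree h
    simp [h1X] at this)
  have hfd : f.natDegree = a + b := by
    rw [hf, natDegree_sub_C, natDegree_mul hXp h1Xb, natDegree_X_pow, natDegree_pow, h1X, mul_one]
  have hf0 : f ≠ 0 := by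
    intro h
    rw [h, natDegree_zero] at hfd
    omega
  -- multiplicity at c via derivative
  have hLc : ((a : k[X]) - ((a : k[X]) + (b : k[X])) * X)
      = C (-(((a : k) + b))) * (X - C c) := by
    have habc : ((a : k) + b) * c = a := by
      rw [hc]; field_simp
    rw [map_neg, neg_mul, mul_sub, ← C_mul, habc, C_add]
    simp only [C_eq_natCast]
    ring
  have hmultd : (derivative f).rootMultiplicity c = 1 := by
    rw [hderiv, hLc]
    have h1 : (X ^ (a - 1) : k[X]) ≠ 0 := pow_ne_zero _ X_ne_zero
    have h2 : ((1 - X : k[X]) ^ (b - 1)) ≠ 0 := pow_ne_zero _ (by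
      intro h
      have := congrArg natDegree h
      simp [h1X] at this)
    have h3 : (C (-(((a : k) + b))) * (X - C c)) ≠ 0 :=
      mul_ne_zero (C_ne_zero.mpr (neg_ne_zero.mpr hab)) (X_sub_C_ne_zero c)
    rw [rootMultiplicity_mul (mul_ne_zero (mul_ne_zero h1 h2) h3),
      rootMultiplicity_mul (mul_ne_zero h1 h2),
      rootMultiplicity_mul h3, rootMultiplicity_C, rootMultiplicity_X_sub_C_self]
    have m1 : rootMultiplicity c (X ^ (a - 1) : k[X]) = 0 :=
      rootMultiplicity_eq_zero (by
        simp only [IsRoot, eval_pow, eval_X]; exact pow_ne_zero _ hc0)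
    have m2 : rootMultiplicity c ((1 - X : k[X]) ^ (b - 1)) = 0 :=
      rootMultiplicity_eq_zero (by
        simp only [IsRoot, eval_pow, eval_sub, eval_one, eval_X]; exact pow_ne_zero _ hc1)
    rw [m1, m2]
  have hmc : f.rootMultiplicity c = 2 := by
    have h1 := derivative_rootMultiplicity_of_root hroot_c
    rw [hmultd] at h1
    have h2 : 0 < f.rootMultiplicity c := (rootMultiplicity_pos hf0).mpr hroot_c
    omega
  refine ⟨hmc, ?_, ?_⟩
  · -- other roots simple
    intro r hr hrc
    obtain ⟨hr0, hr1⟩ := hne r hr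
    have hdr : ¬ (derivative f).IsRoot r := by
      rw [IsRoot, hevald]
      refine mul_ne_zero (mul_ne_zero (pow_ne_zero _ hr0) (pow_ne_zero _ hr1)) ?_
      rw [sub_ne_zero]
      intro h
      apply hrc
      rw [hc, eq_div_iff hab, mul_comm, ← h]
    have h1 := derivative_rootMultiplicity_of_root hr
    rw [rootMultiplicity_eq_zero hdr] at h1
    have h2 : 0 < f.rootMultiplicity r := (rootMultiplicity_pos hf0).mpr hr
    omega
  · -- counting distinct roots
    have hsplits : f.Splits := IsAlgClosed.splits f
    have hcard : Multiset.card f.roots = a + b := by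
      rw [(splits_iff_card_roots).mp hsplits, hfd]
    have hsum : ∑ r ∈ f.roots.toFinset, f.roots.count r = Multiset.card f.roots :=
      Multiset.toFinset_sum_count_eq _
    have hcmem : c ∈ f.roots.toFinset := by
      rw [Multiset.mem_toFinset, mem_roots']
      exact ⟨hf0, hroot_c⟩
    have hsum2 : ∑ r ∈ f.roots.toFinset, f.roots.count r
        = f.roots.count c + ∑ r ∈ f.roots.toFinset.erase c, f.roots.count r :=
      (Finset.add_sum_erase _ _ hcmem).symm
    have hothers : ∑ r ∈ f.roots.toFinset.erase c, f.roots.count r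
        = (f.roots.toFinset.erase c).card := by
      rw [Finset.card_eq_sum_ones]
      refine Finset.sum_congr rfl ?_
      intro r hr
      obtain ⟨hrc, hrT⟩ := Finset.mem_erase.mp hr
      rw [Multiset.mem_toFinset, mem_roots'] at hrT
      have hm1 : f.rootMultiplicity r = 1 := by
        obtain ⟨hr0, hr1⟩ := hne r hrT.2
        have hdr : ¬ (derivative f).IsRoot r := by
          rw [IsRoot, hevald]
          refine mul_ne_zero (mul_ne_zero (pow_ne_zero _ hr0) (pow_ne_zero _ hr1)) ?_
          rw [sub_ne_zero]
          intro h
          apply hrc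
          rw [hc, eq_div_iff hab, mul_comm, ← h]
        have h1 := derivative_rootMultiplicity_of_root hrT.2
        rw [rootMultiplicity_eq_zero hdr] at h1
        have h2 : 0 < f.rootMultiplicity r := (rootMultiplicity_pos hf0).mpr hrT.2
        omega
      rw [count_roots, hm1]
    have hcc : f.roots.count c = 2 := by rw [count_roots, hmc]
    have hce : (f.roots.toFinset.erase c).card = f.roots.toFinset.card - 1 :=
      Finset.card_erase_of_mem hcmem
    have hpos : 0 < f.roots.toFinset.card := Finset.card_pos.mpr ⟨c, hcmem⟩
    omega
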